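/- Let 0 < p < ∞ and 0 < q < ∞. Suppose (v_j)_{j≥1} is a sequence of elements of ℓ_{p,q} with pairwise disjoint supports and ‖v_j‖_{p,q} ≥ α for some α > 0. Then ‖∑_{j=1}^k v_j‖_{p,q} → ∞ as k → ∞. -/

import Mathlib

open Filter MeasureTheory Set
open scoped ENNReal NNReal Topology

/-- Non-increasing rearrangement of a sequence (0-indexed: `rearr u j` is the
`(j+1)`-th largest value of `|u|`). -/
noncomputable def rearr (u : ℕ → ℝ) (j : ℕ) : ℝ :=
  sInf {t : ℝ | 0 ≤ t ∧ Set.encard {i : ℕ | t < |u i|} ≤ (j : ℕ∞)}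

/-- Lorentz sequence quasi-norm `‖u‖_{p,q}` for `q < ∞`. -/
noncomputable def lorentzNorm (p q : ℝ) (u : ℕ → ℝ) : ℝ≥0∞ :=
  (∑' j : ℕ, ENNReal.ofReal (((j : ℝ) + 1) ^ (q / p - 1) * rearr u j ^ q)) ^ (1 / q)

/-- Lorentz sequence quasi-norm `‖u‖_{p,∞}`. -/
noncomputable def lorentzNormInf (p : ℝ) (u : ℕ → ℝ) : ℝ≥0∞ :=
  ⨆ j : ℕ, ENNReal.ofReal (((j : ℝ) + 1) ^ (1 / p) * rearr u j)

/-- Lorentz sequence quasi-norm with extended second index. -/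
noncomputable def lorentzNormE (p : ℝ) (q : ℝ≥0∞) (u : ℕ → ℝ) : ℝ≥0∞ :=
  if q = ⊤ then lorentzNormInf p u else lorentzNorm p q.toReal u

namespace LorentzProof

noncomputable def dd (u : ℕ → ℝ) (t : ℝ) : ℕ∞ := {i : ℕ | t < |u i|}.encard

def ND (u : ℕ → ℝ) : Prop := ∀ t : ℝ, 0 < t → dd u t ≠ ⊤

def Rset (u : ℕ → ℝ) (n : ℕ) : Set ℝ := {t : ℝ | 0 ≤ t ∧ dd u t ≤ (n : ℕ∞)}

lemma rearr_eq (u : ℕ → ℝ) (n : ℕ) : rearr u n = sInf (Rset u n) := rfl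

lemma rearr_nonneg (u : ℕ → ℝ) (n : ℕ) : 0 ≤ rearr u n :=
  Real.sInf_nonneg (fun _ ht => ht.1)

lemma dd_anti (u : ℕ → ℝ) {t s : ℝ} (h : t ≤ s) : dd u s ≤ dd u t :=
  Set.encard_le_encard (fun _ hi => lt_of_le_of_lt h hi)

lemma dd_le_of_forall (u : ℕ → ℝ) (t : ℝ) (n : ℕ)
    (h : ∀ s, t < s → dd u s ≤ (n : ℕ∞)) : dd u t ≤ (n : ℕ∞) := by
  by_contra hlt
  push_neg at hlt
  have h1 : (((n+1 : ℕ) : ℕ∞)) ≤ dd u t := by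
    push_cast
    exact Order.add_one_le_of_lt hlt
  obtain ⟨T, hTsub, hTcard⟩ := Set.exists_subset_encard_eq h1
  have hTfin : T.Finite := Set.finite_of_encard_eq_coe hTcard
  have hTne : T.Nonempty := by
    rw [← Set.encard_pos, hTcard]
    exact_mod_cast Nat.succ_pos n
  obtain ⟨i0, hi0, hmin⟩ := Set.exists_min_image T (fun i => |u i|) hTfin hTne
  have ht0 : t < |u i0| := hTsub hi0
  set s := (t + |u i0|) / 2 with hs
  have h2 : t < s := by simp only [hs]; linarith
  have h3 : s < |u i0| := by simp only [hs]; linarith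
  have hsub : T ⊆ {i : ℕ | s < |u i|} := fun i hi => lt_of_lt_of_le h3 (hmin i hi)
  have h4 : (((n+1 : ℕ) : ℕ∞)) ≤ dd u s := hTcard ▸ Set.encard_le_encard hsub
  have h5 := h s h2
  have := le_trans h4 h5
  rw [Nat.cast_le] at this
  omega

lemma exists_dd_eq_zero {u : ℕ → ℝ} (h : ND u) : ∃ t : ℝ, 0 < t ∧ dd u t = 0 := by
  have h1 := h 1 one_pos
  have hF : {i : ℕ | 1 < |u i|}.Finite := by
    rw [← Set.encard_ne_top_iff]; exact h1
  rcases eq_empty_or_nonempty {i : ℕ | 1 < |u i|} with he | hne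
  · exact ⟨1, one_pos, by rw [dd, he, Set.encard_empty]⟩
  · obtain ⟨i1, hi1, hmax⟩ := Set.exists_max_image _ (fun i => |u i|) hF hne
    refine ⟨|u i1|, lt_trans one_pos hi1, ?_⟩
    rw [dd, Set.encard_eq_zero]
    ext i
    simp only [Set.mem_setOf_eq, Set.mem_empty_iff_false, iff_false, not_lt]
    by_contra hc
    push_neg at hc
    exact absurd (hmax i (lt_trans hi1 hc)) (not_le.mpr hc)

lemma Rset_nonempty {u : ℕ → ℝ} (h : ND u) (n : ℕ) : (Rset u n).Nonempty := by
  obtain ⟨t, ht, h0⟩ := exists_dd_eq_zero h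
  exact ⟨t, ht.le, by rw [h0]; exact zero_le⟩

lemma rearr_le_iff {u : ℕ → ℝ} (h : ND u) {t : ℝ} (ht : 0 < t) {n : ℕ} :
    rearr u n ≤ t ↔ dd u t ≤ (n : ℕ∞) := by
  constructor
  · intro hle
    apply dd_le_of_forall
    intro s hs
    have hlt : sInf (Rset u n) < s := lt_of_le_of_lt (by rw [← rearr_eq]; exact hle) hs
    obtain ⟨x, hx, hxs⟩ := exists_lt_of_csInf_lt (Rset_nonempty h n) hlt
    exact le_trans (dd_anti u hxs.le) hx.2
  · intro hdd
    rw [rearr_eq]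
    exact csInf_le ⟨0, fun x hx => hx.1⟩ ⟨ht.le, hdd⟩

lemma lt_rearr_iff {u : ℕ → ℝ} (h : ND u) {t : ℝ} (ht : 0 < t) {n : ℕ} :
    t < rearr u n ↔ (n : ℕ∞) < dd u t := by
  rw [← not_le, ← not_le, rearr_le_iff h ht]

noncomputable def w' (p q : ℝ) (n : ℕ) : ℝ≥0∞ := ENNReal.ofReal (((n : ℝ) + 1) ^ (q / p - 1))

noncomputable def S (p q : ℝ) (u : ℕ → ℝ) : ℝ≥0∞ :=
  ∑' n, w' p q n * ENNReal.ofReal (rearr u n) ^ q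

noncomputable def WW (p q : ℝ) (ν : ℕ∞) : ℝ≥0∞ :=
  ∑' n : ℕ, if (n : ℕ∞) < ν then w' p q n else 0

noncomputable def φq (q : ℝ) (m : ℤ) : ℝ≥0∞ := ENNReal.ofReal ((2 : ℝ) ^ ((m : ℝ) * q))

noncomputable def T (p q : ℝ) (u : ℕ → ℝ) : ℝ≥0∞ :=
  ∑' m : ℤ, φq q m * WW p q (dd u ((2 : ℝ) ^ (m : ℝ)))

noncomputable def Cq (q : ℝ) : ℝ≥0∞ := (1 - ENNReal.ofReal ((2 : ℝ) ^ (-q)))⁻¹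

lemma lorentz_eq_S (p q : ℝ) (hq : 0 < q) (u : ℕ → ℝ) :
    lorentzNorm p q u = (S p q u) ^ (1 / q) := by
  unfold lorentzNorm S
  congr 1
  refine tsum_congr fun n => ?_
  rw [ENNReal.ofReal_mul (Real.rpow_nonneg (by positivity) _),
    ← ENNReal.ofReal_rpow_of_nonneg (rearr_nonneg u n) hq.le]
  rfl

lemma ofReal_two_rpow_pos (x : ℝ) : 0 < ENNReal.ofReal ((2:ℝ) ^ x) :=
  ENNReal.ofReal_pos.mpr (Real.rpow_pos_of_pos two_pos x)

lemma Cq_ne_top (q : ℝ) (hq : 0 < q) : Cq q ≠ ⊤ := by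
  rw [Cq, ENNReal.inv_ne_top]
  have h1 : (2:ℝ) ^ (-q) < 1 := Real.rpow_lt_one_of_one_lt_of_neg one_lt_two (neg_neg_of_pos hq)
  have : ENNReal.ofReal ((2:ℝ) ^ (-q)) < 1 := by
    rw [← ENNReal.ofReal_one]
    exact ENNReal.ofReal_lt_ofReal_iff_of_nonneg (by positivity) |>.mpr h1
  exact (tsub_pos_of_lt this).ne'

lemma Cq_ne_zero (q : ℝ) : Cq q ≠ 0 := by
  rw [Cq, Ne, ENNReal.inv_eq_zero]
  exact (tsub_le_self.trans_lt (by norm_num)).ne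

/-- geometric sub-lemma -/
lemma sum_phi_le (q : ℝ) (hq : 0 < q) (a : ℝ) :
    (∑' m : ℤ, if (2:ℝ) ^ (m : ℝ) < a then φq q m else 0)
      ≤ Cq q * ENNReal.ofReal a ^ q := by
  rcases le_or_gt a 0 with ha | ha
  · have h0 : ∀ m : ℤ, (if (2:ℝ) ^ (m : ℝ) < a then φq q m else 0) = 0 := by
      intro m
      rw [if_neg]
      exact fun hc => absurd (lt_trans (Real.rpow_pos_of_pos two_pos _) hc) (not_lt.mpr ha)
    refine le_trans (le_of_eq (tsum_congr h0)) ?_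
    simp
  · have hle : ∀ m : ℤ, (2:ℝ) ^ (m:ℝ) < a → m ≤ ⌊Real.logb 2 a⌋ := by
      intro m hc
      apply Int.le_floor.mpr
      have : (m : ℝ) < Real.logb 2 a := by
        rw [← Real.rpow_lt_rpow_left_iff (x := (2:ℝ)) one_lt_two,
          Real.rpow_logb two_pos (by norm_num) ha]
        exact hc
      exact this.le
    set m0 : ℤ := ⌊Real.logb 2 a⌋ with hm0
    have heq : (∑' m : ℤ, if (2:ℝ) ^ (m : ℝ) < a then φq q m else 0)
        = ∑' i : ℕ, (if (2:ℝ) ^ ((m0 - (i:ℤ) : ℤ) : ℝ) < a then φq q (m0 - (i:ℤ)) else 0) := by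
      refine (Function.Injective.tsum_eq (g := fun i : ℕ => m0 - (i:ℤ)) ?_ ?_).symm
      · intro i j hij; simpa using hij
      · intro m hm
        rw [Function.mem_support] at hm
        have hcond : (2:ℝ) ^ (m:ℝ) < a := by
          by_contra h
          exact hm (if_neg h)
        have hmle : m ≤ m0 := hle m hcond
        refine ⟨(m0 - m).toNat, ?_⟩
        show m0 - ((m0 - m).toNat : ℤ) = m
        rw [Int.toNat_of_nonneg (by omega)]
        omega
    rw [heq]
    have hb : ∀ i : ℕ, (if (2:ℝ) ^ ((m0 - (i:ℤ) : ℤ) : ℝ) < a then φq q (m0 - (i:ℤ)) else 0) ≤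
        ENNReal.ofReal ((2:ℝ) ^ ((m0 : ℝ) * q)) * (ENNReal.ofReal ((2:ℝ) ^ (-q))) ^ i := by
      intro i
      have hphi : φq q (m0 - (i:ℤ)) =
          ENNReal.ofReal ((2:ℝ) ^ ((m0 : ℝ) * q)) * (ENNReal.ofReal ((2:ℝ) ^ (-q))) ^ i := by
        rw [φq, ← ENNReal.ofReal_pow (by positivity),
          ← ENNReal.ofReal_mul (by positivity)]
        congr 1
        rw [← Real.rpow_natCast ((2:ℝ) ^ (-q)) i, ← Real.rpow_mul (by norm_num),
          ← Real.rpow_add two_pos]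
        congr 1
        push_cast
        ring
      split_ifs
      · rw [hphi]
      · exact zero_le
    calc ∑' i : ℕ, (if (2:ℝ) ^ ((m0 - (i:ℤ) : ℤ) : ℝ) < a then φq q (m0 - (i:ℤ)) else 0)
        ≤ ∑' i : ℕ, ENNReal.ofReal ((2:ℝ) ^ ((m0 : ℝ) * q)) * (ENNReal.ofReal ((2:ℝ) ^ (-q))) ^ i :=
          ENNReal.tsum_le_tsum hb
      _ = ENNReal.ofReal ((2:ℝ) ^ ((m0 : ℝ) * q)) * Cq q := by
          rw [ENNReal.tsum_mul_left, ENNReal.tsum_geometric, Cq]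
      _ ≤ Cq q * ENNReal.ofReal a ^ q := by
          rw [mul_comm]
          refine mul_le_mul_right ?_ _
          rw [ENNReal.ofReal_rpow_of_nonneg ha.le hq.le]
          apply ENNReal.ofReal_le_ofReal
          rw [Real.rpow_mul (by norm_num)]
          refine Real.rpow_le_rpow (by positivity) ?_ hq.le
          rw [← Real.rpow_logb two_pos (by norm_num) ha]
          exact Real.rpow_le_rpow_left_iff one_lt_two |>.mpr (Int.floor_le _)

lemma exists_dyadic {a : ℝ} (ha : 0 < a) :
    ∃ m : ℤ, (2:ℝ) ^ (m : ℝ) < a ∧ a ≤ (2:ℝ) ^ ((m : ℝ) + 1) := by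
  set c := Real.logb 2 a with hc
  refine ⟨⌈c⌉ - 1, ?_, ?_⟩
  · rw [← Real.rpow_logb two_pos (by norm_num) ha, ← hc,
      Real.rpow_lt_rpow_left_iff one_lt_two]
    push_cast
    have := Int.ceil_lt_add_one c
    linarith
  · rw [← Real.rpow_logb two_pos (by norm_num) ha, ← hc,
      Real.rpow_le_rpow_left_iff one_lt_two]
    push_cast
    have := Int.le_ceil c
    linarith


lemma T_eq (p q : ℝ) (u : ℕ → ℝ) : T p q u = ∑' n : ℕ, ∑' m : ℤ,
    (if (n:ℕ∞) < dd u ((2:ℝ) ^ (m:ℝ)) then φq q m * w' p q n else 0) := by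
  rw [T, ← ENNReal.tsum_comm]
  refine tsum_congr fun m => ?_
  rw [WW, ← ENNReal.tsum_mul_left]
  exact tsum_congr fun n => by rw [mul_ite, mul_zero]

lemma T_le_S (p q : ℝ) (hq : 0 < q) {u : ℕ → ℝ} (hu : ND u) :
    T p q u ≤ Cq q * S p q u := by
  rw [T_eq]
  have hn : ∀ n : ℕ, (∑' m : ℤ, (if (n:ℕ∞) < dd u ((2:ℝ)^(m:ℝ)) then φq q m * w' p q n else 0))
      ≤ Cq q * (w' p q n * ENNReal.ofReal (rearr u n) ^ q) := by
    intro n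
    have h1 : ∀ m : ℤ, (if (n:ℕ∞) < dd u ((2:ℝ)^(m:ℝ)) then φq q m * w' p q n else 0)
        = w' p q n * (if (2:ℝ)^(m:ℝ) < rearr u n then φq q m else 0) := by
      intro m
      have hiff : ((n:ℕ∞) < dd u ((2:ℝ)^(m:ℝ))) ↔ ((2:ℝ)^(m:ℝ) < rearr u n) :=
        (lt_rearr_iff hu (Real.rpow_pos_of_pos two_pos _)).symm
      rw [mul_ite, mul_zero]
      exact if_congr hiff (mul_comm _ _) rfl
    calc (∑' m : ℤ, (if (n:ℕ∞) < dd u ((2:ℝ)^(m:ℝ)) then φq q m * w' p q n else 0))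
        = ∑' m : ℤ, w' p q n * (if (2:ℝ)^(m:ℝ) < rearr u n then φq q m else 0) :=
          tsum_congr h1
      _ = w' p q n * ∑' m : ℤ, (if (2:ℝ)^(m:ℝ) < rearr u n then φq q m else 0) :=
          ENNReal.tsum_mul_left
      _ ≤ w' p q n * (Cq q * ENNReal.ofReal (rearr u n) ^ q) :=
          mul_le_mul_right (sum_phi_le q hq _) _
      _ = Cq q * (w' p q n * ENNReal.ofReal (rearr u n) ^ q) := by ring
  refine le_trans (ENNReal.tsum_le_tsum hn) (le_of_eq ?_)
  rw [ENNReal.tsum_mul_left]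
  rfl

lemma S_le_T (p q : ℝ) (hq : 0 < q) {u : ℕ → ℝ} (hu : ND u) :
    S p q u ≤ ENNReal.ofReal ((2:ℝ) ^ q) * T p q u := by
  have hn : ∀ n : ℕ, w' p q n * ENNReal.ofReal (rearr u n) ^ q ≤
      ENNReal.ofReal ((2:ℝ)^q) *
        ∑' m : ℤ, (if (n:ℕ∞) < dd u ((2:ℝ)^(m:ℝ)) then φq q m * w' p q n else 0) := by
    intro n
    rcases eq_or_lt_of_le (rearr_nonneg u n) with h0 | hpos
    · rw [← h0]
      simp [ENNReal.zero_rpow_of_pos hq]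
    · obtain ⟨m, hm1, hm2⟩ := exists_dyadic hpos
      have hcond : (n:ℕ∞) < dd u ((2:ℝ)^(m:ℝ)) :=
        (lt_rearr_iff hu (Real.rpow_pos_of_pos two_pos _)).mp hm1
      have hA : ENNReal.ofReal (rearr u n) ^ q ≤ ENNReal.ofReal ((2:ℝ)^q) * φq q m := by
        rw [ENNReal.ofReal_rpow_of_nonneg (rearr_nonneg u n) hq.le, φq,
          ← ENNReal.ofReal_mul (by positivity)]
        apply ENNReal.ofReal_le_ofReal
        have hexp : ((2:ℝ)^((m:ℝ)+1))^q = (2:ℝ)^q * (2:ℝ)^((m:ℝ)*q) := by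
          rw [← Real.rpow_mul (by norm_num : (0:ℝ) ≤ 2), add_mul, one_mul,
            Real.rpow_add two_pos, mul_comm]
        rw [← hexp]
        exact Real.rpow_le_rpow (rearr_nonneg u n) hm2 hq.le
      calc w' p q n * ENNReal.ofReal (rearr u n)^q
          ≤ w' p q n * (ENNReal.ofReal ((2:ℝ)^q) * φq q m) := mul_le_mul_right hA _
        _ = ENNReal.ofReal ((2:ℝ)^q) * (φq q m * w' p q n) := by ring
        _ ≤ ENNReal.ofReal ((2:ℝ)^q) *
            ∑' m' : ℤ, (if (n:ℕ∞) < dd u ((2:ℝ)^((m':ℤ):ℝ)) then φq q m' * w' p q n else 0) := by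
            refine mul_le_mul_right ?_ _
            refine le_trans (le_of_eq ?_) (ENNReal.le_tsum m)
            rw [if_pos hcond]
  refine le_trans (ENNReal.tsum_le_tsum hn) (le_of_eq ?_)
  rw [ENNReal.tsum_mul_left, T_eq]


lemma rpow_telescope {s : ℝ} (hs0 : 0 < s) (hs1 : s ≤ 1) (x : ℝ) (hx : 0 ≤ x) :
    s * (x+1) ^ (s - 1) ≤ (x+1) ^ s - x ^ s := by
  have hx1 : (0:ℝ) < x + 1 := by linarith
  have hy : 0 ≤ x / (x+1) := by positivity
  have amgm := Real.geom_mean_le_arith_mean2_weighted hs0.le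
    (by linarith : (0:ℝ) ≤ 1 - s) hy zero_le_one (by ring)
  rw [Real.one_rpow, mul_one, mul_one] at amgm
  set A := (x+1)^(s-1) with hA
  set E := (x+1)^s with hEdef
  have hE : E = x * A + A := by
    rw [hEdef, hA, show s = (s-1)+1 by ring, Real.rpow_add hx1, Real.rpow_one]
    ring
  have hxs : x ^ s = (x/(x+1))^s * E := by
    rw [hEdef, ← Real.mul_rpow hy (by linarith), div_mul_cancel₀ _ (ne_of_gt hx1)]
  have hEpos : 0 < E := Real.rpow_pos_of_pos hx1 s
  have h2 : x ^ s ≤ (s * (x/(x+1)) + (1-s)) * E := by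
    rw [hxs]
    exact mul_le_mul_of_nonneg_right amgm hEpos.le
  have hyE : (x/(x+1)) * E = x * A := by
    rw [hE, hA]
    field_simp
  have h3 : (s * (x/(x+1)) + (1-s)) * E = s * (x*A) + (1-s)*E := by
    calc (s * (x/(x+1)) + (1-s)) * E = s * ((x/(x+1)) * E) + (1-s)*E := by ring
      _ = s * (x*A) + (1-s)*E := by rw [hyE]
  rw [h3] at h2
  have h4 : s*E = s*(x*A) + s*A := by rw [hE]; ring
  linarith

lemma WW_coe (p q : ℝ) (ν : ℕ) : WW p q (ν : ℕ∞) = ∑ n ∈ Finset.range ν, w' p q n := by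
  rw [WW, tsum_eq_sum (s := Finset.range ν)]
  · refine Finset.sum_congr rfl fun n hn => ?_
    rw [if_pos]
    exact_mod_cast Finset.mem_range.mp hn
  · intro n hn
    rw [if_neg]
    intro hc
    exact hn (Finset.mem_range.mpr (by exact_mod_cast hc))

lemma WW_mono (p q : ℝ) {ν ν' : ℕ∞} (h : ν ≤ ν') : WW p q ν ≤ WW p q ν' := by
  refine ENNReal.tsum_le_tsum fun n => ?_
  split_ifs with h1 h2
  · exact le_rfl
  · exact absurd (lt_of_lt_of_le h1 h) h2
  · exact zero_le
  · exact le_rfl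

lemma exists_nat_rpow_gt (x : ℝ≥0∞) (hx : x ≠ ⊤) {s : ℝ} (hs : 0 < s) :
    ∃ N : ℕ, ∀ ν : ℕ, N ≤ ν → x < ((ν : ℝ≥0∞)) ^ s := by
  obtain ⟨N, hN⟩ := ENNReal.exists_nat_gt
    (ENNReal.rpow_ne_top_of_nonneg (by positivity) hx : x ^ (1/s) ≠ ⊤)
  refine ⟨N, fun ν hν => ?_⟩
  have h1 : x ^ (1/s) < (ν : ℝ≥0∞) := lt_of_lt_of_le hN (by exact_mod_cast hν)
  have h2 := ENNReal.rpow_lt_rpow h1 hs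
  rwa [← ENNReal.rpow_mul, one_div, inv_mul_cancel₀ hs.ne', ENNReal.rpow_one] at h2

lemma WW_ge (p q : ℝ) (hp : 0 < p) (hq : 0 < q) (ν : ℕ) :
    ((ν : ℝ≥0∞)) ^ (min 1 (q/p)) ≤ WW p q (ν : ℕ∞) := by
  rcases Nat.eq_zero_or_pos ν with rfl | hν
  · rw [Nat.cast_zero, ENNReal.zero_rpow_of_pos (lt_min one_pos (by positivity))]
    exact zero_le
  have hνR : (1:ℝ) ≤ (ν:ℝ) := by exact_mod_cast hν
  rw [WW_coe]
  have key : (ν:ℝ) ^ (min 1 (q/p)) ≤ ∑ n ∈ Finset.range ν, ((n:ℝ)+1)^(q/p-1) := by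
    rcases le_or_gt 1 (q/p) with hs | hs
    · rw [min_eq_left hs, Real.rpow_one]
      calc (ν:ℝ) = ∑ _n ∈ Finset.range ν, (1:ℝ) := by
            rw [Finset.sum_const, Finset.card_range]; simp
        _ ≤ _ := Finset.sum_le_sum fun n _ =>
            Real.one_le_rpow (by linarith [Nat.cast_nonneg (α := ℝ) n]) (by linarith)
    · rw [min_eq_right hs.le]
      have hterm : ∀ n ∈ Finset.range ν, ((ν:ℝ))^(q/p-1) ≤ ((n:ℝ)+1)^(q/p-1) := by
        intro n hn
        have h1 : (n:ℝ)+1 ≤ (ν:ℝ) := by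
          have := Finset.mem_range.mp hn
          exact_mod_cast Nat.succ_le_of_lt this
        exact Real.rpow_le_rpow_of_nonpos (by positivity) h1 (by linarith)
      have hsplit : (ν:ℝ)^(q/p) = (ν:ℝ) * (ν:ℝ)^(q/p-1) := by
        nth_rewrite 1 [show q/p = 1 + (q/p -1) by ring]
        rw [Real.rpow_add (by linarith), Real.rpow_one]
      calc (ν:ℝ)^(q/p) = (ν:ℝ) * (ν:ℝ)^(q/p-1) := hsplit
        _ = ∑ _n ∈ Finset.range ν, ((ν:ℝ))^(q/p-1) := by
            rw [Finset.sum_const, Finset.card_range, nsmul_eq_mul]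
        _ ≤ _ := Finset.sum_le_sum hterm
  calc ((ν : ℝ≥0∞)) ^ (min 1 (q/p)) = ENNReal.ofReal ((ν:ℝ) ^ (min 1 (q/p))) := by
        rw [← ENNReal.ofReal_rpow_of_nonneg (Nat.cast_nonneg ν)
          (le_of_lt (lt_min one_pos (by positivity))), ENNReal.ofReal_natCast]
    _ ≤ ENNReal.ofReal (∑ n ∈ Finset.range ν, ((n:ℝ)+1)^(q/p-1)) :=
        ENNReal.ofReal_le_ofReal key
    _ = ∑ n ∈ Finset.range ν, w' p q n := by
        rw [ENNReal.ofReal_sum_of_nonneg fun n _ => Real.rpow_nonneg (by positivity) _]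
        rfl

lemma WW_top (p q : ℝ) (hp : 0 < p) (hq : 0 < q) : WW p q ⊤ = ⊤ := by
  by_contra hne
  have hs0 : 0 < min 1 (q/p) := lt_min one_pos (by positivity)
  obtain ⟨N, hN⟩ := exists_nat_rpow_gt (WW p q ⊤) hne hs0
  have h1 : WW p q ⊤ < ((N:ℝ≥0∞)) ^ (min 1 (q/p)) := hN N le_rfl
  have h2 : ((N:ℝ≥0∞)) ^ (min 1 (q/p)) ≤ WW p q ⊤ :=
    le_trans (WW_ge p q hp hq N) (WW_mono p q le_top)
  exact absurd (lt_of_lt_of_le h1 h2) (lt_irrefl _)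


lemma WW_le (p q : ℝ) (hp : 0 < p) (hq : 0 < q) (hqp : q < p) (ν : ℕ∞) :
    WW p q ν ≤ ENNReal.ofReal (p/q) * (ENat.toENNReal ν) ^ (q/p) := by
  induction ν using ENat.recTopCoe with
  | top =>
      rw [ENat.toENNReal_top, ENNReal.top_rpow_of_pos (by positivity),
        ENNReal.mul_top (by simp [ENNReal.ofReal_eq_zero]; positivity)]
      exact le_top
  | coe ν =>
      rw [WW_coe, ENat.toENNReal_coe]
      have hs0 : 0 < q/p := by positivity
      have hs1 : q/p ≤ 1 := by rw [div_le_one hp]; exact hqp.le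
      have hreal : ∑ n ∈ Finset.range ν, ((n:ℝ)+1)^(q/p-1) ≤ (p/q) * (ν:ℝ)^(q/p) := by
        have hterm : ∀ n ∈ Finset.range ν,
            ((n:ℝ)+1)^(q/p-1) ≤ (p/q) * (((n:ℝ)+1)^(q/p) - ((n:ℝ))^(q/p)) := by
          intro n _
          have h1 := rpow_telescope hs0 hs1 (n:ℝ) (Nat.cast_nonneg n)
          calc ((n:ℝ)+1)^(q/p-1) = (p/q) * ((q/p) * ((n:ℝ)+1)^(q/p-1)) := by
                field_simp
            _ ≤ (p/q) * (((n:ℝ)+1)^(q/p) - ((n:ℝ))^(q/p)) :=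
                mul_le_mul_of_nonneg_left h1 (by positivity)
        have htel : ∑ n ∈ Finset.range ν, (((n:ℝ)+1)^(q/p) - ((n:ℝ))^(q/p))
            = ((ν:ℝ))^(q/p) := by
          have h0 := Finset.sum_range_sub (fun n : ℕ => ((n:ℝ))^(q/p)) ν
          simp only [Nat.cast_zero, Real.zero_rpow hs0.ne', sub_zero] at h0
          rw [← h0]
          refine Finset.sum_congr rfl fun n _ => ?_
          push_cast
          ring_nf

        calc ∑ n ∈ Finset.range ν, ((n:ℝ)+1)^(q/p-1)
            ≤ ∑ n ∈ Finset.range ν, (p/q) * (((n:ℝ)+1)^(q/p) - ((n:ℝ))^(q/p)) :=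
              Finset.sum_le_sum hterm
          _ = (p/q) * ∑ n ∈ Finset.range ν, (((n:ℝ)+1)^(q/p) - ((n:ℝ))^(q/p)) := by
              rw [Finset.mul_sum]
          _ = (p/q) * (ν:ℝ)^(q/p) := by rw [htel]
      calc ∑ n ∈ Finset.range ν, w' p q n
          = ENNReal.ofReal (∑ n ∈ Finset.range ν, ((n:ℝ)+1)^(q/p-1)) := by
            rw [ENNReal.ofReal_sum_of_nonneg fun n _ => Real.rpow_nonneg (by positivity) _]
            rfl
        _ ≤ ENNReal.ofReal ((p/q) * (ν:ℝ)^(q/p)) := ENNReal.ofReal_le_ofReal hreal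
        _ = ENNReal.ofReal (p/q) * ((ν:ℝ≥0∞)) ^ (q/p) := by
            rw [ENNReal.ofReal_mul (by positivity),
              ← ENNReal.ofReal_rpow_of_nonneg (Nat.cast_nonneg ν) hs0.le,
              ENNReal.ofReal_natCast]

lemma WW_add_ge (p q : ℝ) (hp : 0 < p) (hq : 0 < q) (hpq : p ≤ q) (a b : ℕ∞) :
    WW p q a + WW p q b ≤ WW p q (a + b) := by
  induction a using ENat.recTopCoe with
  | top => rw [top_add, WW_top p q hp hq]; exact le_top
  | coe a =>
    induction b using ENat.recTopCoe with
    | top => rw [add_top, WW_top p q hp hq]; exact le_top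
    | coe b =>
      rw [← Nat.cast_add, WW_coe, WW_coe, WW_coe, Finset.sum_range_add (w' p q) a b]
      refine add_le_add_right (Finset.sum_le_sum fun n _ => ?_) _
      refine ENNReal.ofReal_le_ofReal ?_
      refine Real.rpow_le_rpow (by positivity) (by push_cast; linarith [Nat.cast_nonneg (α := ℝ) a]) ?_
      have : 1 ≤ q/p := by rw [le_div_iff₀ hp]; linarith
      linarith

lemma rpow_sum_le (J : Finset ℕ) (z : ℕ → ℝ≥0∞) {s : ℝ} (hs0 : 0 < s) (hs1 : s ≤ 1) :
    ∑ j ∈ J, z j ^ s ≤ (J.card : ℝ≥0∞) ^ (1 - s) * (∑ j ∈ J, z j) ^ s := by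
  rcases J.eq_empty_or_nonempty with rfl | hne
  · simp
  set k : ℝ≥0∞ := (J.card : ℝ≥0∞) with hk
  have hk0 : k ≠ 0 := by
    rw [hk]
    exact_mod_cast (Finset.card_pos.mpr hne).ne'
  have hkt : k ≠ ⊤ := ENNReal.natCast_ne_top _
  have hw : ∑ _j ∈ J, k⁻¹ = 1 := by
    rw [Finset.sum_const, nsmul_eq_mul, ← hk, ENNReal.mul_inv_cancel hk0 hkt]
  have hps : (1:ℝ) ≤ 1/s := by rw [le_div_iff₀ hs0]; linarith
  have main := ENNReal.rpow_arith_mean_le_arith_mean_rpow J (fun _ => k⁻¹)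
    (fun j => z j ^ s) hw hps
  have hzz : ∀ j : ℕ, (z j ^ s) ^ (1/s) = z j := by
    intro j
    rw [← ENNReal.rpow_mul, mul_one_div, div_self hs0.ne', ENNReal.rpow_one]
  simp only [hzz] at main
  have main2 := ENNReal.rpow_le_rpow main hs0.le
  rw [← ENNReal.rpow_mul, one_div, inv_mul_cancel₀ hs0.ne', ENNReal.rpow_one] at main2
  -- main2 : ∑ k⁻¹ * z j ^ s ≤ (∑ k⁻¹ * z j) ^ s
  have hL : ∑ j ∈ J, k⁻¹ * z j ^ s = k⁻¹ * ∑ j ∈ J, z j ^ s := by rw [Finset.mul_sum]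
  have hR : ∑ j ∈ J, k⁻¹ * z j = k⁻¹ * ∑ j ∈ J, z j := by rw [Finset.mul_sum]
  rw [hL, hR] at main2
  have hmulpow : (k⁻¹ * ∑ j ∈ J, z j) ^ s = (k⁻¹) ^ s * (∑ j ∈ J, z j) ^ s :=
    ENNReal.mul_rpow_of_nonneg _ _ hs0.le
  rw [hmulpow] at main2
  calc ∑ j ∈ J, z j ^ s = k * (k⁻¹ * ∑ j ∈ J, z j ^ s) := by
        rw [← mul_assoc, ENNReal.mul_inv_cancel hk0 hkt, one_mul]
    _ ≤ k * ((k⁻¹) ^ s * (∑ j ∈ J, z j) ^ s) := mul_le_mul_right main2 _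
    _ = (k * (k⁻¹) ^ s) * (∑ j ∈ J, z j) ^ s := by rw [mul_assoc]
    _ = k ^ (1 - s) * (∑ j ∈ J, z j) ^ s := by
        congr 1
        rw [ENNReal.inv_rpow, show (1:ℝ) - s = 1 + -s by ring,
          ENNReal.rpow_add 1 (-s) hk0 hkt, ENNReal.rpow_one, ENNReal.rpow_neg]


lemma toENNReal_sum (J : Finset ℕ) (ν : ℕ → ℕ∞) :
    ∑ j ∈ J, ENat.toENNReal (ν j) = ENat.toENNReal (∑ j ∈ J, ν j) := by
  induction J using Finset.cons_induction with
  | empty => simp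
  | cons a Jr ha ih => rw [Finset.sum_cons, Finset.sum_cons, ENat.toENNReal_add, ih]

lemma WW_super (p q : ℝ) (hp : 0 < p) (hq : 0 < q) (J : Finset ℕ) (ν : ℕ → ℕ∞) :
    ENNReal.ofReal (min 1 (q/p)) * (J.card : ℝ≥0∞) ^ (min 1 (q/p) - 1) * ∑ j ∈ J, WW p q (ν j)
      ≤ WW p q (∑ j ∈ J, ν j) := by
  rcases le_or_gt p q with hpq | hqp
  · have hmin : min 1 (q/p) = 1 := min_eq_left (by rw [le_div_iff₀ hp]; linarith)
    rw [hmin, sub_self, ENNReal.rpow_zero, ENNReal.ofReal_one, one_mul, one_mul]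
    induction J using Finset.cons_induction with
    | empty => simp
    | cons a Jr ha ih =>
        rw [Finset.sum_cons, Finset.sum_cons]
        exact le_trans (add_le_add_right ih _) (WW_add_ge p q hp hq hpq _ _)
  · have hs0 : 0 < q/p := by positivity
    have hs1 : q/p < 1 := by rw [div_lt_one hp]; exact hqp
    have hmin : min 1 (q/p) = q/p := min_eq_right hs1.le
    rw [hmin]
    rcases J.eq_empty_or_nonempty with rfl | hne
    · simp
    by_cases htop : ∃ j ∈ J, ν j = ⊤
    · obtain ⟨j0, hj0, hjt⟩ := htop
      have hsum : ∑ j ∈ J, ν j = ⊤ := by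
        rw [← top_le_iff, ← hjt]
        exact Finset.single_le_sum (fun _ _ => zero_le) hj0
      rw [hsum, WW_top p q hp hq]
      exact le_top
    push_neg at htop
    set k : ℝ≥0∞ := (J.card : ℝ≥0∞) with hkdef
    have hk0 : k ≠ 0 := by rw [hkdef]; exact_mod_cast (Finset.card_pos.mpr hne).ne'
    have hkt : k ≠ ⊤ := ENNReal.natCast_ne_top _
    have h1 : ∑ j ∈ J, WW p q (ν j)
        ≤ ENNReal.ofReal (p/q) * ∑ j ∈ J, (ENat.toENNReal (ν j)) ^ (q/p) := by
      rw [Finset.mul_sum]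
      exact Finset.sum_le_sum fun j _ => WW_le p q hp hq hqp _
    have h2 := rpow_sum_le J (fun j => ENat.toENNReal (ν j)) hs0 hs1.le
    obtain ⟨Nk, hNk⟩ : ∃ n : ℕ, ∑ j ∈ J, ν j = (n : ℕ∞) := by
      have hne' : ∑ j ∈ J, ν j ≠ ⊤ := WithTop.sum_ne_top.mpr htop
      exact ⟨(∑ j ∈ J, ν j).toNat, (ENat.coe_toNat hne').symm⟩
    have h4 : (ENat.toENNReal (∑ j ∈ J, ν j)) ^ (q/p) ≤ WW p q (∑ j ∈ J, ν j) := by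
      rw [hNk, ENat.toENNReal_coe, ← hmin]
      exact WW_ge p q hp hq Nk
    have hchain : ∑ j ∈ J, WW p q (ν j)
        ≤ ENNReal.ofReal (p/q) * (k ^ (1 - q/p) * WW p q (∑ j ∈ J, ν j)) := by
      refine le_trans h1 (mul_le_mul_right ?_ _)
      refine le_trans h2 (mul_le_mul_right ?_ _)
      rw [toENNReal_sum]
      exact h4
    calc ENNReal.ofReal (q/p) * k ^ (q/p - 1) * ∑ j ∈ J, WW p q (ν j)
        ≤ ENNReal.ofReal (q/p) * k ^ (q/p - 1) *
          (ENNReal.ofReal (p/q) * (k ^ (1 - q/p) * WW p q (∑ j ∈ J, ν j))) :=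
          mul_le_mul_right hchain _
      _ = (ENNReal.ofReal (q/p) * ENNReal.ofReal (p/q)) * (k ^ (q/p - 1) * k ^ (1 - q/p))
            * WW p q (∑ j ∈ J, ν j) := by ring
      _ = WW p q (∑ j ∈ J, ν j) := by
          have e1 : (q/p) * (p/q) = 1 := by field_simp
          have e2 : (q/p - 1) + (1 - q/p) = 0 := by ring
          rw [← ENNReal.ofReal_mul (by positivity), e1, ENNReal.ofReal_one,
            ← ENNReal.rpow_add _ _ hk0 hkt, e2, ENNReal.rpow_zero, one_mul, one_mul]


lemma tsum_w'_top (p q : ℝ) (hp : 0 < p) (hq : 0 < q) : ∑' n : ℕ, w' p q n = ⊤ := by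
  have h := WW_top p q hp hq
  rw [WW] at h
  rw [← h]
  exact tsum_congr fun n => (if_pos (by exact_mod_cast ENat.coe_lt_top n)).symm

lemma tail_top (p q : ℝ) (hp : 0 < p) (hq : 0 < q) (n0 : ℕ) :
    (∑' n : ℕ, if n0 ≤ n then w' p q n else 0) = ⊤ := by
  have hshift : (∑' n : ℕ, if n0 ≤ n then w' p q n else 0) = ∑' i : ℕ, w' p q (i + n0) := by
    rw [← Function.Injective.tsum_eq (g := fun i : ℕ => i + n0) (add_left_injective n0) ?_]
    · exact tsum_congr fun i => if_pos (Nat.le_add_left n0 i)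
    · intro n hn
      rw [Function.mem_support] at hn
      have hn0 : n0 ≤ n := by by_contra h; exact hn (if_neg h)
      refine ⟨n - n0, ?_⟩
      show n - n0 + n0 = n
      omega
  rw [hshift]
  rcases le_or_gt 0 (q/p - 1) with hr | hr
  · rw [← top_le_iff, ← tsum_w'_top p q hp hq]
    refine ENNReal.tsum_le_tsum fun i => ?_
    refine ENNReal.ofReal_le_ofReal (Real.rpow_le_rpow (by positivity) ?_ hr)
    push_cast
    linarith [Nat.cast_nonneg (α := ℝ) n0]
  · have hbound : ∀ i : ℕ, ENNReal.ofReal (((n0:ℝ)+1)^(q/p-1)) * w' p q i ≤ w' p q (i + n0) := by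
      intro i
      rw [w', w', ← ENNReal.ofReal_mul (by positivity),
        ← Real.mul_rpow (by positivity) (by positivity)]
      apply ENNReal.ofReal_le_ofReal
      apply Real.rpow_le_rpow_of_nonpos (by positivity) ?_ hr.le
      push_cast
      nlinarith [Nat.cast_nonneg (α := ℝ) i, Nat.cast_nonneg (α := ℝ) n0]
    rw [← top_le_iff]
    calc (⊤:ℝ≥0∞) = ENNReal.ofReal (((n0:ℝ)+1)^(q/p-1)) * ∑' i, w' p q i := by
          rw [tsum_w'_top p q hp hq, ENNReal.mul_top]
          simp only [Ne, ENNReal.ofReal_eq_zero, not_le]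
          positivity
      _ = ∑' i, ENNReal.ofReal (((n0:ℝ)+1)^(q/p-1)) * w' p q i := ENNReal.tsum_mul_left.symm
      _ ≤ ∑' i, w' p q (i + n0) := ENNReal.tsum_le_tsum hbound

lemma Rset_mono (u : ℕ → ℝ) {n n' : ℕ} (h : n ≤ n') : Rset u n ⊆ Rset u n' :=
  fun t ht => ⟨ht.1, le_trans ht.2 (by exact_mod_cast h)⟩

lemma ND_of_norm (p q : ℝ) (hp : 0 < p) (hq : 0 < q) {u : ℕ → ℝ} {α : ℝ} (hα : 0 < α)
    (hmem : lorentzNorm p q u ≠ ⊤) (hbelow : ENNReal.ofReal α ≤ lorentzNorm p q u) : ND u := by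
  intro t0 ht0 htop
  by_cases hex : ∃ n : ℕ, (Rset u n).Nonempty
  · obtain ⟨n0, t1, ht1⟩ := hex
    have hge : ∀ n : ℕ, ∀ x ∈ Rset u n, t0 ≤ x := by
      intro n x hx
      by_contra hlt
      push_neg at hlt
      have h2 : dd u t0 ≤ (n:ℕ∞) := le_trans (dd_anti u hlt.le) hx.2
      rw [htop] at h2
      exact absurd h2 (by simp)
    have hrearr : ∀ n : ℕ, n0 ≤ n → t0 ≤ rearr u n := by
      intro n hn
      rw [rearr_eq]
      exact le_csInf (Set.Nonempty.mono (Rset_mono u hn) ⟨t1, ht1⟩) (fun x hx => hge n x hx)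
    have hS : S p q u = ⊤ := by
      rw [← top_le_iff]
      have hc : (ENNReal.ofReal t0) ^ q ≠ 0 := by
        simp only [Ne, ENNReal.rpow_eq_zero_iff, not_or]
        constructor
        · rintro ⟨h1, -⟩
          rw [ENNReal.ofReal_eq_zero] at h1
          linarith
        · rintro ⟨h1, -⟩
          exact ENNReal.ofReal_ne_top h1
      calc (⊤:ℝ≥0∞) = (∑' n : ℕ, if n0 ≤ n then w' p q n else 0) * (ENNReal.ofReal t0) ^ q := by
            rw [tail_top p q hp hq n0, ENNReal.top_mul hc]
        _ = ∑' n : ℕ, (if n0 ≤ n then w' p q n else 0) * (ENNReal.ofReal t0) ^ q :=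
            ENNReal.tsum_mul_right.symm
        _ ≤ S p q u := by
            refine ENNReal.tsum_le_tsum fun n => ?_
            split_ifs with h
            · exact mul_le_mul_right (ENNReal.rpow_le_rpow
                (ENNReal.ofReal_le_ofReal (hrearr n h)) hq.le) _
            · simp
    rw [lorentz_eq_S p q hq, hS, ENNReal.top_rpow_of_pos (by positivity)] at hmem
    exact hmem rfl
  · push_neg at hex
    have h0 : ∀ n, rearr u n = 0 := fun n => by
      rw [rearr_eq, hex n, Real.sInf_empty]
    have hS : S p q u = 0 := by
      simp [S, h0, ENNReal.ofReal_zero, ENNReal.zero_rpow_of_pos hq, mul_zero, tsum_zero]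
    have hnorm : lorentzNorm p q u = 0 := by
      rw [lorentz_eq_S p q hq, hS, ENNReal.zero_rpow_of_pos (by positivity)]
    rw [hnorm, le_zero_iff, ENNReal.ofReal_eq_zero] at hbelow
    linarith


lemma dd_sum_eq (v : ℕ → ℕ → ℝ) (hdisj : ∀ j k, j ≠ k → ∀ i, v j i = 0 ∨ v k i = 0)
    {t : ℝ} (ht : 0 ≤ t) :
    ∀ k : ℕ, dd (fun i => ∑ j ∈ Finset.range k, v j i) t = ∑ j ∈ Finset.range k, dd (v j) t := by
  intro k
  induction k with
  | zero =>
      simp only [Finset.range_zero, Finset.sum_empty]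
      rw [dd, Set.encard_eq_zero]
      ext i
      simp only [Set.mem_setOf_eq, Set.mem_empty_iff_false, iff_false, not_lt, abs_zero]
      exact ht
  | succ k ih =>
      have hsplit : ∀ i, (∑ j ∈ Finset.range (k+1), v j i = ∑ j ∈ Finset.range k, v j i
            ∧ v k i = 0)
          ∨ (∑ j ∈ Finset.range (k+1), v j i = v k i ∧ ∑ j ∈ Finset.range k, v j i = 0) := by
        intro i
        by_cases hv : v k i = 0
        · left
          refine ⟨?_, hv⟩
          rw [Finset.sum_range_succ, hv, add_zero]
        · right
          have hz : ∀ j ∈ Finset.range k, v j i = 0 := by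
            intro j hj
            rcases hdisj j k (Nat.ne_of_lt (Finset.mem_range.mp hj)) i with h | h
            · exact h
            · exact absurd h hv
          refine ⟨?_, Finset.sum_eq_zero hz⟩
          rw [Finset.sum_range_succ, Finset.sum_eq_zero hz, zero_add]
      have hset : {i : ℕ | t < |∑ j ∈ Finset.range (k+1), v j i|}
          = {i : ℕ | t < |∑ j ∈ Finset.range k, v j i|} ∪ {i : ℕ | t < |v k i|} := by
        ext i
        rcases hsplit i with ⟨h1, h2⟩ | ⟨h1, h2⟩
        · simp only [Set.mem_setOf_eq, Set.mem_union, h1, h2, abs_zero]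
          constructor
          · exact Or.inl
          · rintro (h | h)
            · exact h
            · linarith
        · simp only [Set.mem_setOf_eq, Set.mem_union, h1, h2, abs_zero]
          constructor
          · exact Or.inr
          · rintro (h | h)
            · linarith
            · exact h
      have hdisj2 : Disjoint {i : ℕ | t < |∑ j ∈ Finset.range k, v j i|}
          {i : ℕ | t < |v k i|} := by
        rw [Set.disjoint_left]
        intro i h1 h2
        rcases hsplit i with ⟨_, hz⟩ | ⟨_, hz⟩
        · rw [Set.mem_setOf_eq, hz, abs_zero] at h2
          linarith
        · rw [Set.mem_setOf_eq, hz, abs_zero] at h1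
          linarith
      rw [dd, hset, Set.encard_union_eq hdisj2, Finset.sum_range_succ, ← ih]
      rfl

lemma master_bound (p q : ℝ) (hp : 0 < p) (hq : 0 < q)
    (α : ℝ) (hα : 0 < α) (v : ℕ → (ℕ → ℝ))
    (hmem : ∀ j, lorentzNorm p q (v j) ≠ ⊤)
    (hdisj : ∀ j k, j ≠ k → ∀ i, v j i = 0 ∨ v k i = 0)
    (hbelow : ∀ j, ENNReal.ofReal α ≤ lorentzNorm p q (v j)) (k : ℕ) :
    ((ENNReal.ofReal ((2:ℝ)^q))⁻¹ * (Cq q)⁻¹ * ENNReal.ofReal (min 1 (q/p))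
        * (ENNReal.ofReal α)^q) * ((k:ℝ≥0∞)) ^ (min 1 (q/p))
      ≤ S p q (fun i => ∑ j ∈ Finset.range k, v j i) := by
  have hs0pos : 0 < min 1 (q/p) := lt_min one_pos (by positivity)
  rcases Nat.eq_zero_or_pos k with rfl | hk
  · rw [Nat.cast_zero, ENNReal.zero_rpow_of_pos hs0pos, mul_zero]
    exact zero_le
  have hNDv : ∀ j, ND (v j) := fun j => ND_of_norm p q hp hq hα (hmem j) (hbelow j)
  have hSv : ∀ j, (ENNReal.ofReal α)^q ≤ S p q (v j) := by
    intro j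
    have h1 := hbelow j
    rw [lorentz_eq_S p q hq] at h1
    have h2 := ENNReal.rpow_le_rpow h1 hq.le
    rwa [← ENNReal.rpow_mul, one_div, inv_mul_cancel₀ hq.ne', ENNReal.rpow_one] at h2
  have hNDu : ND (fun i => ∑ j ∈ Finset.range k, v j i) := by
    intro t ht
    rw [dd_sum_eq v hdisj ht.le k]
    exact WithTop.sum_ne_top.mpr fun j _ => hNDv j t ht
  -- chain on T
  have hTu : ENNReal.ofReal (min 1 (q/p)) * ((k:ℝ≥0∞)) ^ (min 1 (q/p) - 1) *
      ∑ j ∈ Finset.range k, T p q (v j) ≤ T p q (fun i => ∑ j ∈ Finset.range k, v j i) := by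
    have hsum : ∀ m : ℤ, dd (fun i => ∑ j ∈ Finset.range k, v j i) ((2:ℝ)^(m:ℝ))
        = ∑ j ∈ Finset.range k, dd (v j) ((2:ℝ)^(m:ℝ)) :=
      fun m => dd_sum_eq v hdisj (Real.rpow_pos_of_pos two_pos _).le k
    have hswap : ∑ j ∈ Finset.range k, T p q (v j)
        = ∑' m : ℤ, ∑ j ∈ Finset.range k, φq q m * WW p q (dd (v j) ((2:ℝ)^(m:ℝ))) := by
      rw [Summable.tsum_finsetSum fun j _ => ENNReal.summable]
      rfl
    rw [hswap, T, ← ENNReal.tsum_mul_left]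
    refine ENNReal.tsum_le_tsum fun m => ?_
    rw [hsum m]
    have h1 := WW_super p q hp hq (Finset.range k) (fun j => dd (v j) ((2:ℝ)^(m:ℝ)))
    rw [Finset.card_range] at h1
    calc ENNReal.ofReal (min 1 (q/p)) * ((k:ℝ≥0∞)) ^ (min 1 (q/p) - 1) *
          ∑ j ∈ Finset.range k, φq q m * WW p q (dd (v j) ((2:ℝ)^(m:ℝ)))
        = φq q m * (ENNReal.ofReal (min 1 (q/p)) * ((k:ℝ≥0∞)) ^ (min 1 (q/p) - 1) *
          ∑ j ∈ Finset.range k, WW p q (dd (v j) ((2:ℝ)^(m:ℝ)))) := by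
          rw [← Finset.mul_sum]
          ring
      _ ≤ φq q m * WW p q (∑ j ∈ Finset.range k, dd (v j) ((2:ℝ)^(m:ℝ))) :=
          mul_le_mul_right h1 _
  -- lower bound each T (v j)
  have h2q0 : ENNReal.ofReal ((2:ℝ)^q) ≠ 0 := by
    simp only [Ne, ENNReal.ofReal_eq_zero, not_le]
    positivity
  have h2qt : ENNReal.ofReal ((2:ℝ)^q) ≠ ⊤ := ENNReal.ofReal_ne_top
  have hTv : ∀ j, (ENNReal.ofReal ((2:ℝ)^q))⁻¹ * (ENNReal.ofReal α)^q ≤ T p q (v j) := by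
    intro j
    have h1 : (ENNReal.ofReal ((2:ℝ)^q))⁻¹ * S p q (v j) ≤ T p q (v j) := by
      calc (ENNReal.ofReal ((2:ℝ)^q))⁻¹ * S p q (v j)
          ≤ (ENNReal.ofReal ((2:ℝ)^q))⁻¹ * (ENNReal.ofReal ((2:ℝ)^q) * T p q (v j)) :=
            mul_le_mul_right (S_le_T p q hq (hNDv j)) _
        _ = T p q (v j) := by
            rw [← mul_assoc, ENNReal.inv_mul_cancel h2q0 h2qt, one_mul]
    refine le_trans ?_ h1
    exact mul_le_mul_right (hSv j) _
  have hSu : (Cq q)⁻¹ * T p q (fun i => ∑ j ∈ Finset.range k, v j i)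
      ≤ S p q (fun i => ∑ j ∈ Finset.range k, v j i) := by
    calc (Cq q)⁻¹ * T p q (fun i => ∑ j ∈ Finset.range k, v j i)
        ≤ (Cq q)⁻¹ * (Cq q * S p q (fun i => ∑ j ∈ Finset.range k, v j i)) :=
          mul_le_mul_right (T_le_S p q hq hNDu) _
      _ = S p q (fun i => ∑ j ∈ Finset.range k, v j i) := by
          rw [← mul_assoc, ENNReal.inv_mul_cancel (Cq_ne_zero q) (Cq_ne_top q hq), one_mul]
  have hk0' : ((k:ℝ≥0∞)) ≠ 0 := by exact_mod_cast hk.ne'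
  have hkt' : ((k:ℝ≥0∞)) ≠ ⊤ := ENNReal.natCast_ne_top k
  have hkpow' : ((k:ℝ≥0∞)) ^ (min 1 (q/p)) = ((k:ℝ≥0∞)) ^ (min 1 (q/p) - 1) * (k:ℝ≥0∞) := by
    conv_lhs => rw [show min 1 (q/p) = (min 1 (q/p) - 1) + 1 by ring]
    rw [ENNReal.rpow_add _ _ hk0' hkt', ENNReal.rpow_one]
  calc ((ENNReal.ofReal ((2:ℝ)^q))⁻¹ * (Cq q)⁻¹ * ENNReal.ofReal (min 1 (q/p))
        * (ENNReal.ofReal α)^q) * ((k:ℝ≥0∞)) ^ (min 1 (q/p))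
      = (Cq q)⁻¹ * (ENNReal.ofReal (min 1 (q/p)) * ((k:ℝ≥0∞))^(min 1 (q/p) - 1) *
          ((k:ℝ≥0∞) * ((ENNReal.ofReal ((2:ℝ)^q))⁻¹ * (ENNReal.ofReal α)^q))) := by
        rw [hkpow']
        ring
    _ ≤ (Cq q)⁻¹ * (ENNReal.ofReal (min 1 (q/p)) * ((k:ℝ≥0∞))^(min 1 (q/p) - 1) *
          ∑ j ∈ Finset.range k, T p q (v j)) := by
        refine mul_le_mul_right (mul_le_mul_right ?_ _) _
        calc (k:ℝ≥0∞) * ((ENNReal.ofReal ((2:ℝ)^q))⁻¹ * (ENNReal.ofReal α)^q)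
            = ∑ _j ∈ Finset.range k, ((ENNReal.ofReal ((2:ℝ)^q))⁻¹ * (ENNReal.ofReal α)^q) := by
              rw [Finset.sum_const, Finset.card_range, nsmul_eq_mul]
          _ ≤ ∑ j ∈ Finset.range k, T p q (v j) := Finset.sum_le_sum fun j _ => hTv j
    _ ≤ (Cq q)⁻¹ * T p q (fun i => ∑ j ∈ Finset.range k, v j i) := mul_le_mul_right hTu _
    _ ≤ S p q (fun i => ∑ j ∈ Finset.range k, v j i) := hSu

end LorentzProof

open LorentzProof

/-- If `v j ∈ ℓ_{p,q}` have pairwise disjoint supports and `‖v j‖_{p,q} ≥ α > 0`,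
then `‖∑_{j<k} v j‖_{p,q} → ∞`. -/
theorem lorentzNorm_sum_tendsto_top (p q : ℝ) (hp : 0 < p) (hq : 0 < q)
    (α : ℝ) (hα : 0 < α) (v : ℕ → (ℕ → ℝ))
    (hmem : ∀ j, lorentzNorm p q (v j) ≠ ⊤)
    (hdisj : ∀ j k, j ≠ k → ∀ i, v j i = 0 ∨ v k i = 0)
    (hbelow : ∀ j, ENNReal.ofReal α ≤ lorentzNorm p q (v j)) :
    Filter.Tendsto (fun k : ℕ => lorentzNorm p q (fun i => ∑ j ∈ Finset.range k, v j i))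
      Filter.atTop (nhds ⊤) := by

  have hs0pos : 0 < min 1 (q/p) := lt_min one_pos (by positivity)
  set c0 : ℝ≥0∞ := (ENNReal.ofReal ((2:ℝ)^q))⁻¹ * (Cq q)⁻¹ * ENNReal.ofReal (min 1 (q/p))
      * (ENNReal.ofReal α)^q with hc0
  have h2q0 : ENNReal.ofReal ((2:ℝ)^q) ≠ 0 := by
    simp only [Ne, ENNReal.ofReal_eq_zero, not_le]
    positivity
  have hc00 : c0 ≠ 0 := by
    rw [hc0]
    refine mul_ne_zero (mul_ne_zero (mul_ne_zero ?_ ?_) ?_) ?_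
    · exact ENNReal.inv_ne_zero.mpr ENNReal.ofReal_ne_top
    · exact ENNReal.inv_ne_zero.mpr (Cq_ne_top q hq)
    · simp only [Ne, ENNReal.ofReal_eq_zero, not_le]
      exact hs0pos
    · simp only [Ne, ENNReal.rpow_eq_zero_iff, not_or]
      constructor
      · rintro ⟨h1, -⟩
        rw [ENNReal.ofReal_eq_zero] at h1
        linarith
      · rintro ⟨h1, -⟩
        exact ENNReal.ofReal_ne_top h1
  have hc0t : c0 ≠ ⊤ := by
    rw [hc0]
    refine ENNReal.mul_ne_top (ENNReal.mul_ne_top (ENNReal.mul_ne_top ?_ ?_) ?_) ?_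
    · exact ENNReal.inv_ne_top.mpr h2q0
    · exact ENNReal.inv_ne_top.mpr (Cq_ne_zero q)
    · exact ENNReal.ofReal_ne_top
    · exact ENNReal.rpow_ne_top_of_nonneg hq.le ENNReal.ofReal_ne_top
  rw [ENNReal.tendsto_nhds_top_iff_nnreal]
  intro x
  have hxq : ((x:ℝ≥0∞))^q / c0 ≠ ⊤ := by
    refine (ENNReal.div_lt_top ?_ hc00).ne
    exact ENNReal.rpow_ne_top_of_nonneg hq.le ENNReal.coe_ne_top
  obtain ⟨N, hN⟩ := exists_nat_rpow_gt _ hxq hs0pos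
  filter_upwards [Filter.eventually_ge_atTop N] with k hk
  have h1 : ((x:ℝ≥0∞))^q / c0 < ((k:ℝ≥0∞))^(min 1 (q/p)) := hN k hk
  have h2 : ((x:ℝ≥0∞))^q < c0 * ((k:ℝ≥0∞))^(min 1 (q/p)) := by
    rw [ENNReal.div_lt_iff (Or.inl hc00) (Or.inl hc0t)] at h1
    rwa [mul_comm] at h1
  have h3 : ((x:ℝ≥0∞))^q < S p q (fun i => ∑ j ∈ Finset.range k, v j i) :=
    lt_of_lt_of_le h2 (master_bound p q hp hq α hα v hmem hdisj hbelow k)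
  rw [lorentz_eq_S p q hq]
  have h4 := ENNReal.rpow_lt_rpow h3 (by positivity : (0:ℝ) < 1/q)
  rwa [← ENNReal.rpow_mul, mul_one_div, div_self hq.ne', ENNReal.rpow_one] at h4
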